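/- Let K be a field, E a nonzero K-vector space, and R = K ⋉ E the trivial ring extension (idealization) of K by E. Then the weak global dimension of R is infinite. -/

import Mathlib

universe u v

/-- A chained (valuation) ring: the ideals are totally ordered by inclusion. -/
def IsChainedRing (R : Type*) [CommRing R] : Prop :=
  ∀ I J : Ideal R, I ≤ J ∨ J ≤ I

/-- `R` has zero divisors. -/
def HasZeroDivisors (R : Type*) [CommRing R] : Prop :=
  ∃ a b : R, a ≠ 0 ∧ b ≠ 0 ∧ a * b = 0

/-- An arithmetical ring: the localization at every maximal ideal is a chained ring. -/
def IsArithmetical (R : Type*) [CommRing R] : Prop :=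
  ∀ (P : Ideal R) (hP : P.IsMaximal),
    letI := hP.isPrime
    ∀ I J : Ideal (Localization.AtPrime P), I ≤ J ∨ J ≤ I

/-- `FlatDimLE R n M` : the flat (weak) dimension of `M` is at most `n`. -/
def FlatDimLE (R : Type u) [CommRing R] : ℕ → ModuleCat.{u} R → Prop
  | 0, M => Module.Flat R M
  | (n+1), M => ∃ (F : ModuleCat.{u} R) (f : F →ₗ[R] M), Function.Surjective f ∧
      Module.Flat R F ∧ FlatDimLE R n (ModuleCat.of R (LinearMap.ker f))

/-- The flat (weak) dimension of a module, valued in `ℕ∞` (`⊤` if no finite flat resolution). -/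
noncomputable def flatDim (R : Type u) [CommRing R] (M : ModuleCat.{u} R) : ℕ∞ :=
  sInf {n : ℕ∞ | ∃ k : ℕ, n = (k : ℕ∞) ∧ FlatDimLE R k M}

/-- The weak global dimension of `R` is at most `n`. -/
def WgdimLE (R : Type u) [CommRing R] (n : ℕ) : Prop :=
  ∀ M : ModuleCat.{u} R, FlatDimLE R n M

/-- The weak global dimension of `R` is infinite. -/
def HasInfiniteWeakGlobalDimension (R : Type u) [CommRing R] : Prop :=
  ∀ n : ℕ, ∃ M : ModuleCat.{u} R, ¬ FlatDimLE R n M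

/-- The content ideal of a polynomial: the ideal generated by its coefficients. -/
def contentIdeal {R : Type*} [CommRing R] (f : Polynomial R) : Ideal R :=
  Ideal.span (Set.range f.coeff)

/-- A Gaussian ring: `c(fg) = c(f)c(g)` for all polynomials. -/
def IsGaussian (R : Type*) [CommRing R] : Prop :=
  ∀ f g : Polynomial R, contentIdeal (f * g) = contentIdeal f * contentIdeal g

/-- A Prüfer ring: every finitely generated regular ideal is invertible. -/
def IsPruferRing (R : Type u) [CommRing R] : Prop :=
  ∀ I : Ideal R, I.FG → (∃ x ∈ I, x ∈ nonZeroDivisors R) →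
    IsUnit (I : FractionalIdeal (nonZeroDivisors R) (FractionRing R))

/-- A quasi-projective module: every map to a quotient of `M` lifts to an endomorphism. -/
def IsQuasiProjective (R : Type u) [CommRing R] (M : Type v) [AddCommGroup M] [Module R M] : Prop :=
  ∀ (N : Submodule R M) (g : M →ₗ[R] M ⧸ N), ∃ h : M →ₗ[R] M, N.mkQ.comp h = g

open TrivSqZeroExt TensorProduct LinearMap

namespace Stmt14Aux

variable {K : Type u} [Field K] {E : Type u} [AddCommGroup E] [Module K E]
  [Module Kᵐᵒᵖ E] [IsCentralScalar K E]

variable (K E) in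
/-- The ideal `0 ⋉ E`. -/
def mE : Ideal (TrivSqZeroExt K E) :=
  RingHom.ker (TrivSqZeroExt.fstHom K K E).toRingHom

theorem mem_mE {r : TrivSqZeroExt K E} : r ∈ mE K E ↔ r.fst = 0 := Iff.rfl

theorem inr_mem_mE (e : E) : (inr e : TrivSqZeroExt K E) ∈ mE K E := by
  simp [mem_mE]

theorem mul_eq_zero_of_mem_mE {r s : TrivSqZeroExt K E} (hr : r ∈ mE K E) (hs : s ∈ mE K E) :
    r * s = 0 := by
  ext
  · simp [fst_mul, mem_mE.mp hr]
  · simp [snd_mul, mem_mE.mp hr, mem_mE.mp hs]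

section Quot

variable {F : Type u} [AddCommGroup F] [Module (TrivSqZeroExt K E) F]

theorem smul_mkQ_eq_zero {r : TrivSqZeroExt K E} (hr : r ∈ mE K E) (x : F) :
    r • (Submodule.Quotient.mk x : F ⧸ (mE K E • ⊤ : Submodule (TrivSqZeroExt K E) F)) = 0 := by
  rw [← Submodule.Quotient.mk_smul, Submodule.Quotient.mk_eq_zero]
  exact Submodule.smul_mem_smul hr trivial

theorem smul_mk_congr {s t : TrivSqZeroExt K E} (h : s - t ∈ mE K E) (x : F) :
    s • (Submodule.Quotient.mk x : F ⧸ (mE K E • ⊤ : Submodule (TrivSqZeroExt K E) F)) =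
      t • (Submodule.Quotient.mk x : F ⧸ (mE K E • ⊤ : Submodule (TrivSqZeroExt K E) F)) := by
  have h0 := smul_mkQ_eq_zero (F := F) h x
  rwa [sub_smul, sub_eq_zero] at h0

variable (F) in
/-- The bilinear map `mE × F → F ⧸ mE•F`, `((0,e), w) ↦ l e • [w]`. -/
def B (l : E →ₗ[K] K) : (mE K E) →ₗ[TrivSqZeroExt K E]
    F →ₗ[TrivSqZeroExt K E] F ⧸ (mE K E • ⊤ : Submodule (TrivSqZeroExt K E) F) where
  toFun r := algebraMap K (TrivSqZeroExt K E) (l ((r : TrivSqZeroExt K E).snd)) •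
    (mE K E • ⊤ : Submodule (TrivSqZeroExt K E) F).mkQ
  map_add' r s := by
    ext x
    simp only [Submodule.coe_add, snd_add, map_add, LinearMap.smul_apply, LinearMap.add_apply,
      add_smul]
  map_smul' c r := by
    ext x
    have hsnd : ((c • r : mE K E) : TrivSqZeroExt K E).snd = c.fst • (r : TrivSqZeroExt K E).snd := by
      show (c * (r : TrivSqZeroExt K E)).snd = _
      rw [snd_mul, mem_mE.mp r.2]
      simp
    simp only [LinearMap.smul_apply, RingHom.id_apply, LinearMap.coe_mk, AddHom.coe_mk,
      Submodule.mkQ_apply]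
    rw [hsnd, map_smul, smul_eq_mul, map_mul, smul_smul]
    exact smul_mk_congr (by
      rw [← sub_mul]
      refine Ideal.mul_mem_right _ _ ?_
      simp [mem_mE, algebraMap_eq_inl']) x

variable (F) in
/-- `μ : mE ⊗ F → F ⧸ mE•F`. -/
noncomputable def mu (l : E →ₗ[K] K) :
    (mE K E) ⊗[TrivSqZeroExt K E] F →ₗ[TrivSqZeroExt K E]
      F ⧸ (mE K E • ⊤ : Submodule (TrivSqZeroExt K E) F) :=
  TensorProduct.lift (B F l)

@[simp]
theorem mu_tmul (l : E →ₗ[K] K) (r : mE K E) (w : F) :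
    mu F l (r ⊗ₜ w) = algebraMap K (TrivSqZeroExt K E) (l ((r : TrivSqZeroExt K E).snd)) •
      (Submodule.Quotient.mk w : F ⧸ (mE K E • ⊤ : Submodule (TrivSqZeroExt K E) F)) := by
  simp [mu, B]

set_option synthInstance.maxHeartbeats 1000000 in
set_option maxHeartbeats 2000000 in
/-- The key flatness lemma. -/
theorem key {F : Type u} [AddCommGroup F] [Module (TrivSqZeroExt K E) F]
    (hF : Module.Flat (TrivSqZeroExt K E) F)
    (N : Submodule (TrivSqZeroExt K E) F) (z : F) (e : E) (l : E →ₗ[K] K) (hl : l e = 1)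
    (hz : (inr e : TrivSqZeroExt K E) • z ∈ mE K E • N) :
    (Submodule.Quotient.mk z : F ⧸ (mE K E • ⊤ : Submodule (TrivSqZeroExt K E) F)) ∈
      N.map (mE K E • ⊤ : Submodule (TrivSqZeroExt K E) F).mkQ := by
  classical
  set R := TrivSqZeroExt K E
  let θ : ((mE K E) ⊗[R] F) →ₗ[R] F :=
    (TensorProduct.lid R F).toLinearMap ∘ₗ rTensor F (mE K E).subtype
  have hθ : ∀ (r : mE K E) (w : F), θ (r ⊗ₜ w) = (r : R) • w := by
    intro r w; simp [θ]
  have hinj : Function.Injective θ := by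
    have h1 := (Module.Flat.iff_rTensor_injective').mp hF (mE K E)
    exact (TensorProduct.lid R F).injective.comp h1
  let j : ((mE K E) ⊗[R] ↥N) →ₗ[R] ((mE K E) ⊗[R] F) := lTensor (mE K E) N.subtype
  have hrep : ∀ y ∈ mE K E • N, ∃ s : (mE K E) ⊗[R] ↥N, θ (j s) = y := by
    intro y hy
    refine Submodule.smul_induction_on hy ?_ ?_
    · intro r hr n hn
      exact ⟨(⟨r, hr⟩ : mE K E) ⊗ₜ (⟨n, hn⟩ : ↥N), by simp [j, hθ]⟩
    · rintro y₁ y₂ ⟨s₁, hs₁⟩ ⟨s₂, hs₂⟩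
      exact ⟨s₁ + s₂, by simp [map_add, hs₁, hs₂]⟩
  have hmem : ∀ s : (mE K E) ⊗[R] ↥N, mu F l (j s) ∈ N.map (mE K E • ⊤ : Submodule R F).mkQ := by
    intro s
    induction s using TensorProduct.induction_on with
    | zero =>
        rw [map_zero, map_zero]
        exact Submodule.zero_mem _
    | tmul r n =>
        simp only [j, lTensor_tmul, mu_tmul, Submodule.coe_subtype]
        exact Submodule.smul_mem _ _ (Submodule.mem_map_of_mem n.2)
    | add s₁ s₂ h₁ h₂ =>
        rw [map_add, map_add]
        exact Submodule.add_mem _ h₁ h₂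
  obtain ⟨s, hs⟩ := hrep _ hz
  have ht : ((⟨inr e, inr_mem_mE e⟩ : mE K E) ⊗ₜ[R] z) = j s := by
    apply hinj
    rw [hθ, hs]
  have heq := congrArg (mu F l) ht
  rw [mu_tmul] at heq
  simp only [snd_inr, hl, map_one, one_smul] at heq
  rw [heq]
  exact hmem s

end Quot

variable (K E) in
/-- Socle witness predicate: `x ≠ 0`, `mE • x = 0`, `x ∉ mE • M`. -/
def Good (M : Type u) [AddCommGroup M] [Module (TrivSqZeroExt K E) M] : Prop :=
  ∃ x : M, (∀ r ∈ mE K E, r • x = 0) ∧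
    x ∉ (mE K E • ⊤ : Submodule (TrivSqZeroExt K E) M)

theorem exists_dual {e : E} (he : e ≠ 0) : ∃ l : E →ₗ[K] K, l e = 1 := by
  obtain ⟨φ, hφ⟩ : ∃ φ : Module.Dual K E, φ e ≠ 0 := by
    by_contra h
    push_neg at h
    exact he ((Module.forall_dual_apply_eq_zero_iff K e).mp h)
  exact ⟨(φ e)⁻¹ • φ, by simp [inv_mul_cancel₀ hφ]⟩

theorem not_flat_of_good [Nontrivial E] {M : Type u} [AddCommGroup M]
    [Module (TrivSqZeroExt K E) M] (h : Good K E M) :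
    ¬ Module.Flat (TrivSqZeroExt K E) M := by
  intro hF
  obtain ⟨x, h1, h2⟩ := h
  obtain ⟨e, he⟩ := exists_ne (0 : E)
  obtain ⟨l, hl⟩ := exists_dual (K := K) he
  have hz : (inr e : TrivSqZeroExt K E) • x ∈
      mE K E • (⊥ : Submodule (TrivSqZeroExt K E) M) := by
    rw [Submodule.smul_bot, Submodule.mem_bot]
    exact h1 _ (inr_mem_mE e)
  have hk := key hF ⊥ x e l hl hz
  rw [Submodule.map_bot, Submodule.mem_bot] at hk
  exact h2 ((Submodule.Quotient.mk_eq_zero _).mp hk)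

theorem good_ker [Nontrivial E] {M F : Type u} [AddCommGroup M]
    [Module (TrivSqZeroExt K E) M] [AddCommGroup F] [Module (TrivSqZeroExt K E) F]
    (hF : Module.Flat (TrivSqZeroExt K E) F) (f : F →ₗ[TrivSqZeroExt K E] M)
    (hsurj : Function.Surjective f) (h : Good K E M) :
    Good K E ↥(LinearMap.ker f) := by
  obtain ⟨x, h1, h2⟩ := h
  obtain ⟨e, he⟩ := exists_ne (0 : E)
  obtain ⟨l, hl⟩ := exists_dual (K := K) he
  obtain ⟨z, hz⟩ := hsurj x
  have hy : (inr e : TrivSqZeroExt K E) • z ∈ LinearMap.ker f := by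
    rw [LinearMap.mem_ker, map_smul, hz]
    exact h1 _ (inr_mem_mE e)
  refine ⟨⟨(inr e : TrivSqZeroExt K E) • z, hy⟩, ?_, ?_⟩
  · intro r hr
    apply Subtype.ext
    show r • ((inr e : TrivSqZeroExt K E) • z) = 0
    rw [smul_smul, mul_eq_zero_of_mem_mE hr (inr_mem_mE e), zero_smul]
  · intro hmem
    have hmem' : (inr e : TrivSqZeroExt K E) • z ∈ mE K E • (LinearMap.ker f) := by
      have h3 := Submodule.mem_map_of_mem (f := (LinearMap.ker f).subtype) hmem
      rwa [Submodule.map_smul'', Submodule.map_subtype_top] at h3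
    obtain ⟨n, hn, hmk⟩ := key hF (LinearMap.ker f) z e l hl hmem'
    have hzn : z - n ∈ (mE K E • ⊤ : Submodule (TrivSqZeroExt K E) F) :=
      (Submodule.Quotient.eq _).mp (by rw [← hmk]; rfl)
    apply h2
    have hx : x = f (z - n) := by
      rw [map_sub, hz, LinearMap.mem_ker.mp hn, sub_zero]
    rw [hx]
    have h4 := Submodule.mem_map_of_mem (f := f) hzn
    rw [Submodule.map_smul''] at h4
    exact Submodule.smul_mono le_rfl le_top h4

theorem good_base [Nontrivial E] :
    Good K E ((TrivSqZeroExt K E) ⧸ (mE K E : Submodule (TrivSqZeroExt K E) (TrivSqZeroExt K E))) := by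
  refine ⟨Submodule.Quotient.mk 1, ?_, ?_⟩
  · intro r hr
    rw [← Submodule.Quotient.mk_smul, Submodule.Quotient.mk_eq_zero]
    simpa using hr
  · intro hmem
    have hbot : (mE K E • ⊤ : Submodule (TrivSqZeroExt K E)
        ((TrivSqZeroExt K E) ⧸ (mE K E : Submodule (TrivSqZeroExt K E) (TrivSqZeroExt K E)))) ≤ ⊥ := by
      rw [Submodule.smul_le]
      intro r hr m _
      obtain ⟨u, rfl⟩ := Submodule.mkQ_surjective _ m
      rw [Submodule.mem_bot, Submodule.mkQ_apply, ← Submodule.Quotient.mk_smul,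
        Submodule.Quotient.mk_eq_zero]
      exact Ideal.mul_mem_right u _ hr
    have : (Submodule.Quotient.mk (1 : TrivSqZeroExt K E) :
        (TrivSqZeroExt K E) ⧸ (mE K E : Submodule (TrivSqZeroExt K E) (TrivSqZeroExt K E))) = 0 :=
      Submodule.mem_bot _ |>.mp (hbot hmem)
    rw [Submodule.Quotient.mk_eq_zero] at this
    simpa [mem_mE] using this

theorem not_flatDimLE [Nontrivial E] (n : ℕ) :
    ∀ (M : Type u) [AddCommGroup M] [Module (TrivSqZeroExt K E) M], Good K E M →
      ¬ FlatDimLE (TrivSqZeroExt K E) n (ModuleCat.of (TrivSqZeroExt K E) M) := by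
  induction n with
  | zero =>
      intro M _ _ hG hFlat
      exact not_flat_of_good hG hFlat
  | succ n ih =>
      intro M _ _ hG hdim
      obtain ⟨F, f, hsurj, hflat, hrec⟩ := hdim
      exact ih ↥(LinearMap.ker f) (good_ker hflat f hsurj hG) hrec

end Stmt14Aux


/-- The trivial ring extension of a field by a nonzero vector space has
infinite weak global dimension. -/
theorem stmt_14 (K : Type u) [Field K] (E : Type u) [AddCommGroup E]
    [Module K E] [Module Kᵐᵒᵖ E] [IsCentralScalar K E] [Nontrivial E] :
    HasInfiniteWeakGlobalDimension (TrivSqZeroExt K E) := by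
  intro n
  refine ⟨ModuleCat.of _ ((TrivSqZeroExt K E) ⧸
    (Stmt14Aux.mE K E : Submodule (TrivSqZeroExt K E) (TrivSqZeroExt K E))), ?_⟩
  exact Stmt14Aux.not_flatDimLE n _ Stmt14Aux.good_base
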